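/- Let a group G act on a set X such that the G-space (G,X) does not satisfy the Følner condition: there exist a finite set K₀ ⊆ G and n ∈ ℕ such that for every finite nonempty F ⊆ X there is k ∈ K₀ with |F \ k·F| ≥ |F|/n. Then X admits a paradoxical decomposition with respect to K = (K₀ ∪ K₀⁻¹ ∪ {1})^{n₁}, where n₁ satisfies (1 + 1/n)^{n₁} ≥ 3. -/

import Mathlib

open Pointwise

/-- A paradoxical decomposition of the `G`-space `X`. -/
def ParadoxicalDecomposition {G X : Type*} [Group G] [MulAction G X]
    (K : Set G) (A B : G → Set X) : Prop :=
  (∀ x : X, ∃! k : G, k ∈ K ∧ x ∈ A k) ∧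
  (∀ x : X, ∃! k : G, k ∈ K ∧ x ∈ B k) ∧
  (∀ x : X, ∃! p : G × Bool, p.1 ∈ K ∧
    x ∈ (if p.2 then p.1 • A p.1 else p.1 • B p.1))

/-- Schröder–Bernstein with the extra property that the bijection moves each point
along one of the two given injections. -/
theorem csb_aux {α β : Type*} {f : α → β} {g : β → α}
    (hf : Function.Injective f) (hg : Function.Injective g) :
    ∃ h : α → β, Function.Bijective h ∧ ∀ a, h a = f a ∨ g (h a) = a := by
  classical
  open Set Function in
  cases' isEmpty_or_nonempty β with hβ hβ
  · have : IsEmpty α := Function.isEmpty f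
    exact ⟨fun a => isEmptyElim a, ⟨fun a => isEmptyElim a, fun b => isEmptyElim b⟩,
      fun a => isEmptyElim a⟩
  set F : Set α →o Set α :=
    { toFun := fun s => (g '' (f '' s)ᶜ)ᶜ
      monotone' := fun s t hst =>
        compl_subset_compl.mpr <| image_mono <| compl_subset_compl.mpr <| image_mono hst }
  set s : Set α := F.lfp
  have hs : (g '' (f '' s)ᶜ)ᶜ = s := F.map_lfp
  have hns : g '' (f '' s)ᶜ = sᶜ := compl_injective (by simp [hs])
  set g' := invFun g
  have g'g : LeftInverse g' g := leftInverse_invFun hg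
  have hg'ns : g' '' sᶜ = (f '' s)ᶜ := by rw [← hns, g'g.image_image]
  set h : α → β := s.piecewise f g'
  have hsurj : Surjective h := by rw [← range_eq_univ, range_piecewise, hg'ns, union_compl_self]
  have hinj : Injective h := by
    refine (injective_piecewise_iff _).2 ⟨hf.injOn, ?_, ?_⟩
    · intro x hx y hy hxy
      obtain ⟨x', _, rfl⟩ : x ∈ g '' (f '' s)ᶜ := by rwa [hns]
      obtain ⟨y', _, rfl⟩ : y ∈ g '' (f '' s)ᶜ := by rwa [hns]
      rw [g'g _, g'g _] at hxy
      rw [hxy]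
    · intro x hx y hy hxy
      obtain ⟨y', hy', rfl⟩ : y ∈ g '' (f '' s)ᶜ := by rwa [hns]
      rw [g'g _] at hxy
      exact hy' ⟨x, hx, hxy⟩
  refine ⟨h, ⟨hinj, hsurj⟩, fun a => ?_⟩
  by_cases ha : a ∈ s
  · exact Or.inl (Set.piecewise_eq_of_mem _ _ _ ha)
  · right
    obtain ⟨b, _, rfl⟩ : a ∈ g '' (f '' s)ᶜ := by rwa [hns]
    have hb : h (g b) = g' (g b) := Set.piecewise_eq_of_notMem _ _ _ ha
    rw [hb, g'g b]

/-- If the `G`-space `X` fails the Følner condition, witnessed by a finite `K₀ ⊆ G` and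
`n` such that every finite nonempty `F ⊆ X` has `|F \ k·F| ≥ |F|/n` for some `k ∈ K₀`,
then `X` has a paradoxical decomposition with respect to `K = (K₀ ∪ K₀⁻¹ ∪ {1})^{n₁}`,
where `(1 + 1/n)^{n₁} ≥ 3`. -/
theorem paradoxical_of_not_folner {G X : Type*} [Group G] [MulAction G X]
    (K₀ : Finset G) (n n₁ : ℕ) (hn : 0 < n)
    (hn₁ : 3 * n ^ n₁ ≤ (n + 1) ^ n₁)
    (hfol : ∀ F : Set X, F.Finite → F.Nonempty →
        ∃ k ∈ K₀, F.ncard ≤ n * (F \ k • F).ncard) :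
    ∃ A B : G → Set X,
      ParadoxicalDecomposition (((K₀ : Set G) ∪ (K₀ : Set G)⁻¹ ∪ {1}) ^ n₁) A B := by
  classical
  set S : Finset G := K₀ ∪ {1} with hS
  have h1S : (1 : G) ∈ S := Finset.mem_union_right _ (Finset.mem_singleton_self 1)
  -- growth step
  have hgrow : ∀ F : Finset X, (n + 1) * F.card ≤ n * (S • F).card := by
    intro F
    rcases F.eq_empty_or_nonempty with rfl | hne
    · simp
    obtain ⟨k, hk, hcard⟩ := hfol (↑F) F.finite_toSet (by exact_mod_cast hne)
    have hc : F.card ≤ n * (F \ k • F).card := by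
      rwa [show ((↑F : Set X) \ k • ↑F) = ↑(F \ k • F) by
        rw [← Finset.coe_smul_finset, ← Finset.coe_sdiff],
        Set.ncard_coe_finset, Set.ncard_coe_finset] at hcard
    have hsub : F ∪ k • F ⊆ S • F := by
      intro x hx
      rcases Finset.mem_union.1 hx with hx | hx
      · exact Finset.mem_smul.2 ⟨1, h1S, x, hx, one_smul _ _⟩
      · obtain ⟨y, hy, rfl⟩ := Finset.mem_smul_finset.1 hx
        exact Finset.mem_smul.2 ⟨k, Finset.mem_union_left _ hk, y, hy, rfl⟩
    calc (n + 1) * F.card = n * F.card + F.card := by ring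
      _ ≤ n * F.card + n * (F \ k • F).card := by omega
      _ = n * ((F \ k • F).card + (k • F).card) := by
          rw [Finset.card_smul_finset]; ring
      _ = n * (F ∪ k • F).card := by rw [Finset.card_sdiff_add_card]
      _ ≤ n * (S • F).card := Nat.mul_le_mul_left _ (Finset.card_le_card hsub)
  -- iterate
  have hpow : ∀ m (F : Finset X), (n + 1) ^ m * F.card ≤ n ^ m * (S ^ m • F).card := by
    intro m
    induction m with
    | zero => intro F; simp
    | succ m ih =>
        intro F
        calc (n + 1) ^ (m + 1) * F.card = (n + 1) * ((n + 1) ^ m * F.card) := by ring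
          _ ≤ (n + 1) * (n ^ m * (S ^ m • F).card) := Nat.mul_le_mul_left _ (ih F)
          _ = n ^ m * ((n + 1) * (S ^ m • F).card) := by ring
          _ ≤ n ^ m * (n * (S • (S ^ m • F)).card) := Nat.mul_le_mul_left _ (hgrow _)
          _ = n ^ (m + 1) * (S ^ (m + 1) • F).card := by
              rw [show S ^ (m + 1) • F = S • S ^ m • F by rw [pow_succ', mul_smul]]; ring
  set T : Finset G := S ^ n₁ with hT
  have h1T : (1 : G) ∈ T := Finset.one_mem_pow h1S
  have hT3 : ∀ F : Finset X, 3 * F.card ≤ (T • F).card := by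
    intro F
    have h1 : n ^ n₁ * (3 * F.card) ≤ n ^ n₁ * (T • F).card := by
      calc n ^ n₁ * (3 * F.card) = (3 * n ^ n₁) * F.card := by ring
        _ ≤ (n + 1) ^ n₁ * F.card := Nat.mul_le_mul_right _ hn₁
        _ ≤ n ^ n₁ * (T • F).card := hpow n₁ F
    exact Nat.le_of_mul_le_mul_left h1 (pow_pos hn n₁)
  -- Hall's theorem
  set t : X × Bool → Finset X := fun p => T • ({p.1} : Finset X) with ht
  have hall : ∀ s : Finset (X × Bool), s.card ≤ (s.biUnion t).card := by
    intro s
    set F : Finset X := s.image Prod.fst with hF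
    have h1 : s.card ≤ 2 * F.card := by
      have : s ⊆ F ×ˢ (Finset.univ : Finset Bool) := fun p hp =>
        Finset.mem_product.2 ⟨Finset.mem_image_of_mem _ hp, Finset.mem_univ _⟩
      calc s.card ≤ (F ×ˢ (Finset.univ : Finset Bool)).card := Finset.card_le_card this
        _ = 2 * F.card := by
            rw [Finset.card_product, Finset.card_univ, Fintype.card_bool]; ring
    have h2 : T • F ⊆ s.biUnion t := by
      intro x hx
      obtain ⟨k, hk, y, hy, rfl⟩ := Finset.mem_smul.1 hx
      obtain ⟨p, hp, rfl⟩ := Finset.mem_image.1 hy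
      exact Finset.mem_biUnion.2 ⟨p, hp,
        Finset.mem_smul.2 ⟨k, hk, p.1, Finset.mem_singleton_self _, rfl⟩⟩
    calc s.card ≤ 2 * F.card := h1
      _ ≤ 3 * F.card := by omega
      _ ≤ (T • F).card := hT3 F
      _ ≤ (s.biUnion t).card := Finset.card_le_card h2
  obtain ⟨f, hfinj, hft⟩ := (Finset.all_card_le_biUnion_card_iff_exists_injective t).1 hall
  -- Schröder–Bernstein to get a bijection
  have hginj : Function.Injective (fun y : X => (y, false)) := fun a b hab => by
    simpa using congrArg Prod.fst hab
  obtain ⟨h, hbij, hmoves⟩ := csb_aux hfinj hginj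
  have hmove : ∀ p : X × Bool, ∃ k ∈ T, h p = k • p.1 := by
    intro p
    rcases hmoves p with hp | hp
    · obtain ⟨k, hk, z, hz, hzx⟩ := Finset.mem_smul.1 (hft p)
      rw [Finset.mem_singleton] at hz
      exact ⟨k, hk, by rw [hp, ← hzx, hz]⟩
    · refine ⟨1, h1T, ?_⟩
      have := congrArg Prod.fst hp
      simp only at this
      rw [one_smul, this]
  choose a haT haeq using fun x => hmove (x, true)
  choose b hbT hbeq using fun x => hmove (x, false)
  -- the ambient set K
  set Kset : Set G := ((K₀ : Set G) ∪ (K₀ : Set G)⁻¹ ∪ {1}) ^ n₁ with hKset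
  have hTK : (↑T : Set G) ⊆ Kset := by
    rw [hT, Finset.coe_pow, hKset]
    refine Set.pow_subset_pow_left ?_
    rw [hS, Finset.coe_union, Finset.coe_singleton]
    intro g hg
    rcases hg with hg | hg
    · exact Or.inl (Or.inl hg)
    · exact Or.inr hg
  refine ⟨fun k => {x | a x = k}, fun k => {x | b x = k}, ?_, ?_, ?_⟩
  · intro x
    exact ⟨a x, ⟨hTK (haT x), rfl⟩, fun k hk => hk.2.symm⟩
  · intro x
    exact ⟨b x, ⟨hTK (hbT x), rfl⟩, fun k hk => hk.2.symm⟩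
  · intro x
    -- uniqueness helper
    have huniq : ∀ q : G × Bool, q.1 ∈ Kset →
        x ∈ (if q.2 then q.1 • {x | a x = q.1} else q.1 • {x | b x = q.1}) →
        h (q.1⁻¹ • x, q.2) = x ∧
          (if q.2 then a (q.1⁻¹ • x) else b (q.1⁻¹ • x)) = q.1 := by
      rintro ⟨k, i⟩ hkK hx
      cases i with
      | true =>
          simp only [if_true] at hx ⊢
          have hz : a (k⁻¹ • x) = k := (Set.mem_smul_set_iff_inv_smul_mem.1 hx : _)
          refine ⟨?_, hz⟩
          rw [haeq (k⁻¹ • x), hz, smul_inv_smul]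
      | false =>
          simp only [if_neg (Bool.false_ne_true)] at hx ⊢
          have hz : b (k⁻¹ • x) = k := (Set.mem_smul_set_iff_inv_smul_mem.1 hx : _)
          refine ⟨?_, hz⟩
          rw [hbeq (k⁻¹ • x), hz, smul_inv_smul]
    -- existence
    obtain ⟨⟨y, i⟩, hyi⟩ := hbij.2 x
    have hexists : ∃ q : G × Bool, q.1 ∈ Kset ∧
        x ∈ (if q.2 then q.1 • {x | a x = q.1} else q.1 • {x | b x = q.1}) := by
      cases i with
      | true =>
          refine ⟨(a y, true), hTK (haT y), ?_⟩
          simp only [if_true]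
          have : x = a y • y := by rw [← hyi, haeq y]
          rw [this]
          exact Set.smul_mem_smul_set rfl
      | false =>
          refine ⟨(b y, false), hTK (hbT y), ?_⟩
          simp only [if_neg (Bool.false_ne_true)]
          have : x = b y • y := by rw [← hyi, hbeq y]
          rw [this]
          exact Set.smul_mem_smul_set rfl
    obtain ⟨q₀, hq₀K, hq₀x⟩ := hexists
    refine ⟨q₀, ⟨hq₀K, hq₀x⟩, ?_⟩
    rintro q ⟨hqK, hqx⟩
    obtain ⟨hq1, hq2⟩ := huniq q hqK hqx
    obtain ⟨hq₀1, hq₀2⟩ := huniq q₀ hq₀K hq₀x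
    have heq : (q.1⁻¹ • x, q.2) = (q₀.1⁻¹ • x, q₀.2) :=
      hbij.1 (by rw [hq1, hq₀1])
    injection heq with h1 h2
    have hfst : q.1 = q₀.1 := by
      rw [← hq2, ← hq₀2, h1, h2]
    exact Prod.ext hfst h2
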